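/- In the clock-gadget setting with clock dimension n ≥ 2, assume the proportionality conditions (i)–(iv) hold. Let 1 ≤ m ≤ n, ε = (ε₁,…,ε_{m−1}) ∈ {0,1}^{m−1}, and Y = (Y₁,…,Y_m) with each Y_j ∈ ⋃_{i} {W_i, W_i†}, and set Θ(ε,Y) = P₀ Y₁ P_{ε₁} Y₂ P_{ε₂} ⋯ P_{ε_{m−1}} Y_m P₀. If the data (m, ε, Y) is neither (n, (1,…,1), (W₀, W₁,…,W_{n−1})) nor (n, (1,…,1), (W_{n−1}†, W_{n−2}†,…,W₀†)), then there exists a scalar c ∈ ℂ with Θ(ε,Y) = c · P₀. -/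

import Mathlib

open Matrix Kronecker BigOperators

noncomputable section

variable {S : Type*} [Fintype S] [DecidableEq S]

/-- The ground-space projection `P₀ = Γ₀ ⊗ |0⟩⟨0|` on `H_S ⊗ ℂⁿ`. -/
def P0 (n : ℕ) [NeZero n] (Γ₀ : Matrix S S ℂ) : Matrix (S × Fin n) (S × Fin n) ℂ :=
  Γ₀ ⊗ₖ Matrix.single 0 0 1

/-- The hopping operator `Wᵢ = Mᵢ ⊗ |i⟩⟨i+1|` (clock indices taken mod `n`). -/
def Wop {n : ℕ} [NeZero n] (M : Fin n → Matrix S S ℂ) (i : Fin n) :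
    Matrix (S × Fin n) (S × Fin n) ℂ :=
  M i ⊗ₖ Matrix.single i (i + 1) 1

/-- Auxiliary: product `B a * I (a+1) * B (a+1) * ⋯ * I (a+k-1) * B (a+k-1)`. -/
def st14FP (B I : ℕ → Matrix S S ℂ) (a : ℕ) : ℕ → Matrix S S ℂ
  | 0 => 1
  | 1 => B a
  | (k+2) => st14FP B I a (k+1) * I (a+k+1) * B (a+k+1)

lemma st14FP_succ (B I : ℕ → Matrix S S ℂ) (a k : ℕ) (hk : 1 ≤ k) :
    st14FP B I a (k+1) = st14FP B I a k * I (a+k) * B (a+k) := by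
  match k, hk with
  | (k+1), _ => rfl

lemma st14FP_split (B I : ℕ → Matrix S S ℂ) (a : ℕ) :
    ∀ l k, 1 ≤ k → 1 ≤ l →
      st14FP B I a (k+l) = st14FP B I a k * I (a+k) * st14FP B I (a+k) l := by
  intro l
  induction l with
  | zero => omega
  | succ l IH =>
    intro k hk _
    rcases Nat.eq_or_lt_of_le (Nat.one_le_iff_ne_zero.mpr (by omega : l + 1 ≠ 0)) with h | h
    · -- l + 1 = 1, i.e. l = 0
      have hl : l = 0 := by omega
      subst hl
      rw [st14FP_succ B I a k hk]
      rfl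
    · have hl : 1 ≤ l := by omega
      have e1 : k + (l+1) = (k + l) + 1 := by ring
      rw [e1, st14FP_succ B I a (k+l) (by omega), IH k hk hl,
        st14FP_succ B I (a+k) l hl]
      simp [mul_assoc, Nat.add_assoc]

lemma st14FP_congr (B I I' : ℕ → Matrix S S ℂ) (a : ℕ) :
    ∀ k, (∀ j, a < j → j < a + k → I j = I' j) →
      st14FP B I a k = st14FP B I' a k := by
  intro k
  induction k with
  | zero => intro _; rfl
  | succ k IH =>
    intro hag
    rcases Nat.eq_or_lt_of_le (Nat.zero_le k) with h | h
    · subst h; rfl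
    · have hk : 1 ≤ k := h
      rw [st14FP_succ B I a k hk, st14FP_succ B I' a k hk,
        IH (fun j h1 h2 => hag j h1 (by omega)), hag (a+k) (by omega) (by omega)]

/-- `N f z = f z * (f z)ᴴ`. -/
def st14N (f : ℤ → Matrix S S ℂ) (z : ℤ) : Matrix S S ℂ := f z * (f z)ᴴ

lemma st14_mulD (f : ℤ → Matrix S S ℂ)
    (ZII : ∀ z, ∃ c : ℂ, st14N f z * st14N f z = c • st14N f z)
    (h : ℤ) (X D : Matrix S S ℂ)
    (hX : ∃ c : ℂ, X = c • st14N f h)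
    (hD : D = 1 ∨ ∃ c : ℂ, D = c • st14N f h) :
    ∃ c : ℂ, X * D = c • st14N f h := by
  obtain ⟨c, rfl⟩ := hX
  rcases hD with rfl | ⟨d, rfl⟩
  · exact ⟨c, by rw [mul_one]⟩
  · obtain ⟨e, he⟩ := ZII h
    refine ⟨c * d * e, ?_⟩
    rw [smul_mul_assoc, mul_smul_comm, he]
    rw [smul_smul, smul_smul, mul_assoc]

lemma st14comb_up (f : ℤ → Matrix S S ℂ)
    (ZI : ∀ z, ∃ c : ℂ, f z * st14N f (z+1) * (f z)ᴴ = c • (st14N f z * st14N f z))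
    (ZII : ∀ z, ∃ c : ℂ, st14N f z * st14N f z = c • st14N f z)
    (h : ℤ) (C D : Matrix S S ℂ)
    (hC : C = 1 ∨ ∃ c : ℂ, C = c • st14N f (h+1))
    (hD : D = 1 ∨ ∃ c : ℂ, D = c • st14N f h) :
    ∃ c : ℂ, f h * C * (f h)ᴴ * D = c • st14N f h := by
  refine st14_mulD f ZII h _ D ?_ hD
  rcases hC with rfl | ⟨c, rfl⟩
  · exact ⟨1, by rw [mul_one, one_smul]; rfl⟩
  · obtain ⟨e1, he1⟩ := ZI h
    obtain ⟨e2, he2⟩ := ZII h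
    refine ⟨c * (e1 * e2), ?_⟩
    rw [mul_smul_comm, smul_mul_assoc, he1, smul_smul, he2, smul_smul, mul_assoc]

lemma st14comb_down (f : ℤ → Matrix S S ℂ)
    (ZII : ∀ z, ∃ c : ℂ, st14N f z * st14N f z = c • st14N f z)
    (ZIII : ∀ z, ∃ c : ℂ, (f (z-1))ᴴ * f (z-1) = c • st14N f z)
    (h : ℤ) (C D : Matrix S S ℂ)
    (hC : C = 1 ∨ ∃ c : ℂ, C = c • st14N f (h-1))
    (hD : D = 1 ∨ ∃ c : ℂ, D = c • st14N f h) :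
    ∃ c : ℂ, (f (h-1))ᴴ * C * f (h-1) * D = c • st14N f h := by
  refine st14_mulD f ZII h _ D ?_ hD
  rcases hC with rfl | ⟨c, rfl⟩
  · obtain ⟨e, he⟩ := ZIII h
    exact ⟨e, by rw [mul_one, he]⟩
  · obtain ⟨e1, he1⟩ := ZIII h
    obtain ⟨e2, he2⟩ := ZII h
    refine ⟨c * (e1 * e1 * e2), ?_⟩
    have expand : (f (h-1))ᴴ * (c • st14N f (h-1)) * f (h-1)
        = c • (((f (h-1))ᴴ * f (h-1)) * ((f (h-1))ᴴ * f (h-1))) := by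
      rw [mul_smul_comm, smul_mul_assoc]
      congr 1
      simp only [st14N, mul_assoc]
    rw [expand, he1, smul_mul_assoc, mul_smul_comm, he2, smul_smul, smul_smul, smul_smul]
    ring_nf

/-- Core walk lemma: a closed walk product is proportional to `N f (base height)`. -/
lemma st14core (f : ℤ → Matrix S S ℂ)
    (ZI : ∀ z, ∃ c : ℂ, f z * st14N f (z+1) * (f z)ᴴ = c • (st14N f z * st14N f z))
    (ZII : ∀ z, ∃ c : ℂ, st14N f z * st14N f z = c • st14N f z)
    (ZIII : ∀ z, ∃ c : ℂ, (f (z-1))ᴴ * f (z-1) = c • st14N f z)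
    (sg : ℕ → Bool) (hgt : ℕ → ℤ)
    (hstep : ∀ j, hgt (j+1) = hgt j + (if sg j then 1 else -1))
    (B : ℕ → Matrix S S ℂ)
    (hB : ∀ j, B j = if sg j then f (hgt j) else (f (hgt j - 1))ᴴ) :
    ∀ k a, 1 ≤ k → hgt (a+k) = hgt a →
      ∃ c : ℂ, st14FP B (fun _ => 1) a k = c • st14N f (hgt a) := by
  classical
  have hstep2 : ∀ j, hgt (j+1) = hgt j + 1 ∨ hgt (j+1) = hgt j - 1 := by
    intro j
    rcases Bool.dichotomy (sg j) with h | h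
    · right; rw [hstep j, h]; simp; ring
    · left; rw [hstep j, h]; simp
  intro k
  induction k using Nat.strong_induction_on with
  | _ k IH =>
  intro a hk hclosed
  set h := hgt a with hdef
  have hex : ∃ t, a < t ∧ hgt t = h := ⟨a + k, by omega, hclosed⟩
  have hexists : ∃ t₀, (a < t₀ ∧ hgt t₀ = h) ∧ (∀ u, a < u → u < t₀ → hgt u ≠ h) ∧ t₀ ≤ a + k := by
    refine ⟨Nat.find hex, Nat.find_spec hex, ?_, Nat.find_min' hex ⟨by omega, hclosed⟩⟩
    intro u h1 h2 h3
    exact Nat.find_min hex h2 ⟨h1, h3⟩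
  obtain ⟨t₀, ⟨ht₀a, ht₀h⟩, ht₀min, ht₀le⟩ := hexists
  rcases Bool.dichotomy (sg a) with hsa | hsa
  · -- sg a = false : first step goes down
    have hfirst : hgt (a+1) = h - 1 := by rw [hstep a, hsa]; simp; rw [hdef]; ring
    have claim1 : ∀ u, a < u → u < t₀ → hgt u ≤ h - 1 := by
      intro u
      induction u with
      | zero => omega
      | succ u IHu =>
        intro h1 h2
        rcases Nat.lt_or_ge a u with hau | hau
        · have hu := IHu hau (by omega)
          have hne := ht₀min (u+1) (by omega) h2
          rcases hstep2 u with hs | hs <;> omega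
        · have : u = a := by omega
          subst this
          rw [hfirst]
    have ht₀2 : a + 2 ≤ t₀ := by
      rcases Nat.lt_or_ge (a+1) t₀ with hlt | hge
      · omega
      · exfalso
        have he : t₀ = a + 1 := by omega
        rw [he, hfirst] at ht₀h; omega
    have hprev : hgt (t₀ - 1) = h - 1 := by
      have h1 := claim1 (t₀ - 1) (by omega) (by omega)
      have h2 : t₀ - 1 + 1 = t₀ := by omega
      rcases hstep2 (t₀ - 1) with hs | hs <;> rw [h2, ht₀h] at hs <;> omega
    have hsgprev : sg (t₀ - 1) = true := by
      rcases Bool.dichotomy (sg (t₀-1)) with hf | ht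
      · exfalso
        have hs := hstep (t₀ - 1)
        have h2 : t₀ - 1 + 1 = t₀ := by omega
        rw [hf, h2, ht₀h] at hs
        simp at hs
        omega
      · exact ht
    set t' := t₀ - a with ht'def
    have ht'2 : 2 ≤ t' := by omega
    have ht'k : t' ≤ k := by omega
    have hBa : B a = (f (h - 1))ᴴ := by rw [hB a, hsa]; simp; rfl
    have hBprev : B (t₀ - 1) = f (h - 1) := by
      rw [hB (t₀-1), hsgprev, hprev]; simp
    have hC : (if t' = 2 then (1 : Matrix S S ℂ) else st14FP B (fun _ => 1) (a+1) (t'-2))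
        = 1 ∨ ∃ c : ℂ, (if t' = 2 then (1 : Matrix S S ℂ) else st14FP B (fun _ => 1) (a+1) (t'-2)) = c • st14N f (h-1) := by
      by_cases h2 : t' = 2
      · left; simp [h2]
      · right
        rw [if_neg h2]
        have hcl : hgt (a + 1 + (t' - 2)) = hgt (a+1) := by
          have he : a + 1 + (t' - 2) = t₀ - 1 := by omega
          rw [he, hprev, hfirst]
        obtain ⟨c, hc⟩ := IH (t'-2) (by omega) (a+1) (by omega) hcl
        exact ⟨c, by rw [hc, hfirst]⟩
    have hsec : st14FP B (fun _ => 1) a t' =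
        (f (h-1))ᴴ * (if t' = 2 then (1 : Matrix S S ℂ) else st14FP B (fun _ => 1) (a+1) (t'-2)) * f (h-1) := by
      by_cases h2 : t' = 2
      · rw [h2, if_pos rfl]
        have he : st14FP B (fun _ => 1) a 2 = B a * (fun _ => (1:Matrix S S ℂ)) (a+1) * B (a+1) := rfl
        rw [he]
        have he2 : a + 1 = t₀ - 1 := by omega
        rw [he2, hBa, hBprev]
      · rw [if_neg h2]
        have e1 : t' = 1 + (t' - 2) + 1 := by omega
        rw [e1, st14FP_succ B _ a (1 + (t'-2)) (by omega),
          st14FP_split B _ a (t'-2) 1 (by omega) (by omega)]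
        have e2 : a + (1 + (t'-2)) = t₀ - 1 := by omega
        rw [e2, hBprev]
        have e3 : st14FP B (fun _ => 1) a 1 = B a := rfl
        rw [e3, hBa]
        simp [mul_assoc]
    by_cases hteq : t' = k
    · obtain ⟨c, hc⟩ := st14comb_down f ZII ZIII h _ (1 : Matrix S S ℂ) hC (Or.inl rfl)
      refine ⟨c, ?_⟩
      rw [← hteq, hsec]
      rw [mul_one] at hc
      exact hc
    · have hsplit : st14FP B (fun _ => 1) a k =
          st14FP B (fun _ => 1) a t' * st14FP B (fun _ => 1) (a + t') (k - t') := by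
        have e1 : k = t' + (k - t') := by omega
        conv_lhs => rw [e1]
        rw [st14FP_split B _ a (k - t') t' (by omega) (by omega)]
        simp [mul_assoc]
      have hclD : hgt (a + t' + (k - t')) = hgt (a + t') := by
        have e1 : a + t' + (k - t') = a + k := by omega
        have e2 : a + t' = t₀ := by omega
        rw [e1, e2, hclosed, ht₀h]
      obtain ⟨d, hd⟩ := IH (k - t') (by omega) (a + t') (by omega) hclD
      have hD : st14FP B (fun _ => 1) (a+t') (k-t') = 1 ∨
          ∃ c : ℂ, st14FP B (fun _ => 1) (a+t') (k-t') = c • st14N f h := by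
        right
        refine ⟨d, ?_⟩
        rw [hd]
        have e2 : a + t' = t₀ := by omega
        rw [e2, ht₀h]
      obtain ⟨c, hc⟩ := st14comb_down f ZII ZIII h _ _ hC hD
      refine ⟨c, ?_⟩
      rw [hsplit, hsec, ← hc]
  · -- sg a = true : first step goes up
    have hfirst : hgt (a+1) = h + 1 := by rw [hstep a, hsa]; simp; rfl
    have claim1 : ∀ u, a < u → u < t₀ → h + 1 ≤ hgt u := by
      intro u
      induction u with
      | zero => omega
      | succ u IHu =>
        intro h1 h2
        rcases Nat.lt_or_ge a u with hau | hau
        · have hu := IHu hau (by omega)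
          have hne := ht₀min (u+1) (by omega) h2
          rcases hstep2 u with hs | hs <;> omega
        · have : u = a := by omega
          subst this
          rw [hfirst]
    have ht₀2 : a + 2 ≤ t₀ := by
      rcases Nat.lt_or_ge (a+1) t₀ with hlt | hge
      · omega
      · exfalso
        have he : t₀ = a + 1 := by omega
        rw [he, hfirst] at ht₀h; omega
    have hprev : hgt (t₀ - 1) = h + 1 := by
      have h1 := claim1 (t₀ - 1) (by omega) (by omega)
      have h2 : t₀ - 1 + 1 = t₀ := by omega
      rcases hstep2 (t₀ - 1) with hs | hs <;> rw [h2, ht₀h] at hs <;> omega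
    have hsgprev : sg (t₀ - 1) = false := by
      rcases Bool.dichotomy (sg (t₀-1)) with hf | ht
      · exact hf
      · exfalso
        have hs := hstep (t₀ - 1)
        have h2 : t₀ - 1 + 1 = t₀ := by omega
        rw [ht, h2, ht₀h] at hs
        simp at hs
        omega
    set t' := t₀ - a with ht'def
    have ht'2 : 2 ≤ t' := by omega
    have ht'k : t' ≤ k := by omega
    have hBa : B a = f h := by rw [hB a, hsa]; simp; rfl
    have hBprev : B (t₀ - 1) = (f h)ᴴ := by
      rw [hB (t₀-1), hsgprev, hprev]
      norm_num
    have hC : (if t' = 2 then (1 : Matrix S S ℂ) else st14FP B (fun _ => 1) (a+1) (t'-2))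
        = 1 ∨ ∃ c : ℂ, (if t' = 2 then (1 : Matrix S S ℂ) else st14FP B (fun _ => 1) (a+1) (t'-2)) = c • st14N f (h+1) := by
      by_cases h2 : t' = 2
      · left; simp [h2]
      · right
        rw [if_neg h2]
        have hcl : hgt (a + 1 + (t' - 2)) = hgt (a+1) := by
          have he : a + 1 + (t' - 2) = t₀ - 1 := by omega
          rw [he, hprev, hfirst]
        obtain ⟨c, hc⟩ := IH (t'-2) (by omega) (a+1) (by omega) hcl
        exact ⟨c, by rw [hc, hfirst]⟩
    have hsec : st14FP B (fun _ => 1) a t' =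
        f h * (if t' = 2 then (1 : Matrix S S ℂ) else st14FP B (fun _ => 1) (a+1) (t'-2)) * (f h)ᴴ := by
      by_cases h2 : t' = 2
      · rw [h2, if_pos rfl]
        have he : st14FP B (fun _ => 1) a 2 = B a * (fun _ => (1:Matrix S S ℂ)) (a+1) * B (a+1) := rfl
        rw [he]
        have he2 : a + 1 = t₀ - 1 := by omega
        rw [he2, hBa, hBprev]
      · rw [if_neg h2]
        have e1 : t' = 1 + (t' - 2) + 1 := by omega
        rw [e1, st14FP_succ B _ a (1 + (t'-2)) (by omega),
          st14FP_split B _ a (t'-2) 1 (by omega) (by omega)]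
        have e2 : a + (1 + (t'-2)) = t₀ - 1 := by omega
        rw [e2, hBprev]
        have e3 : st14FP B (fun _ => 1) a 1 = B a := rfl
        rw [e3, hBa]
        simp [mul_assoc]
    by_cases hteq : t' = k
    · obtain ⟨c, hc⟩ := st14comb_up f ZI ZII h _ (1 : Matrix S S ℂ) hC (Or.inl rfl)
      refine ⟨c, ?_⟩
      rw [← hteq, hsec]
      rw [mul_one] at hc
      exact hc
    · have hsplit : st14FP B (fun _ => 1) a k =
          st14FP B (fun _ => 1) a t' * st14FP B (fun _ => 1) (a + t') (k - t') := by
        have e1 : k = t' + (k - t') := by omega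
        conv_lhs => rw [e1]
        rw [st14FP_split B _ a (k - t') t' (by omega) (by omega)]
        simp [mul_assoc]
      have hclD : hgt (a + t' + (k - t')) = hgt (a + t') := by
        have e1 : a + t' + (k - t') = a + k := by omega
        have e2 : a + t' = t₀ := by omega
        rw [e1, e2, hclosed, ht₀h]
      obtain ⟨d, hd⟩ := IH (k - t') (by omega) (a + t') (by omega) hclD
      have hD : st14FP B (fun _ => 1) (a+t') (k-t') = 1 ∨
          ∃ c : ℂ, st14FP B (fun _ => 1) (a+t') (k-t') = c • st14N f h := by
        right
        refine ⟨d, ?_⟩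
        rw [hd]
        have e2 : a + t' = t₀ := by omega
        rw [e2, ht₀h]
      obtain ⟨c, hc⟩ := st14comb_up f ZI ZII h _ _ hC hD
      refine ⟨c, ?_⟩
      rw [hsplit, hsec, ← hc]

lemma st14glue (Γ₀ : Matrix S S ℂ) (hΓ : Γ₀ * Γ₀ = Γ₀) (X Y : Matrix S S ℂ) (cX cY : ℂ)
    (hX : Γ₀ * X * Γ₀ = cX • Γ₀) (hY : Γ₀ * Y * Γ₀ = cY • Γ₀) :
    Γ₀ * (X * Γ₀ * Y) * Γ₀ = (cX * cY) • Γ₀ := by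
  calc Γ₀ * (X * Γ₀ * Y) * Γ₀ = Γ₀ * (X * (Γ₀ * Γ₀) * Y) * Γ₀ := by rw [hΓ]
    _ = (Γ₀ * X * Γ₀) * (Γ₀ * Y * Γ₀) := by simp only [mul_assoc]
    _ = (cX • Γ₀) * (cY • Γ₀) := by rw [hX, hY]
    _ = (cX * cY) • (Γ₀ * Γ₀) := by rw [smul_mul_assoc, mul_smul_comm, smul_smul]
    _ = (cX * cY) • Γ₀ := by rw [hΓ]

/-- Sandwich lemma: decorated closed walk based at height 0 collapses to `Γ₀`. -/
lemma st14sand (f : ℤ → Matrix S S ℂ)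
    (ZI : ∀ z, ∃ c : ℂ, f z * st14N f (z+1) * (f z)ᴴ = c • (st14N f z * st14N f z))
    (ZII : ∀ z, ∃ c : ℂ, st14N f z * st14N f z = c • st14N f z)
    (ZIII : ∀ z, ∃ c : ℂ, (f (z-1))ᴴ * f (z-1) = c • st14N f z)
    (sg : ℕ → Bool) (hgt : ℕ → ℤ)
    (hstep : ∀ j, hgt (j+1) = hgt j + (if sg j then 1 else -1))
    (B : ℕ → Matrix S S ℂ)
    (hB : ∀ j, B j = if sg j then f (hgt j) else (f (hgt j - 1))ᴴ)
    (Γ₀ : Matrix S S ℂ) (hΓ : Γ₀ * Γ₀ = Γ₀)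
    (hiv : ∃ c : ℂ, Γ₀ * st14N f 0 * Γ₀ = c • Γ₀) :
    ∀ r (I : ℕ → Matrix S S ℂ) a k, 1 ≤ k → hgt a = 0 → hgt (a+k) = 0 →
      (∀ j, a < j → j < a + k → I j = 1 ∨ (hgt j = 0 ∧ (I j = Γ₀ ∨ I j = 1 - Γ₀))) →
      ((Finset.Ico (a+1) (a+k)).filter (fun j => I j ≠ 1)).card ≤ r →
      ∃ c : ℂ, Γ₀ * st14FP B I a k * Γ₀ = c • Γ₀ := by
  classical
  obtain ⟨civ, hciv⟩ := hiv
  -- base computation for insertion-free segments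
  have hwalk : ∀ (a k : ℕ), 1 ≤ k → hgt a = 0 → hgt (a+k) = 0 →
      ∃ c : ℂ, st14FP B (fun _ => 1) a k = c • st14N f 0 := by
    intro a k hk h0 hk0
    have hcl : hgt (a + k) = hgt a := by rw [h0, hk0]
    obtain ⟨c, hc⟩ := st14core f ZI ZII ZIII sg hgt hstep B hB k a hk hcl
    exact ⟨c, by rw [hc, h0]⟩
  have hbase : ∀ (I : ℕ → Matrix S S ℂ) (a k : ℕ), 1 ≤ k → hgt a = 0 → hgt (a+k) = 0 →
      (∀ j, a < j → j < a + k → I j = 1) →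
      ∃ c : ℂ, Γ₀ * st14FP B I a k * Γ₀ = c • Γ₀ := by
    intro I a k hk h0 hk0 htriv
    obtain ⟨c, hc⟩ := hwalk a k hk h0 hk0
    have he : st14FP B I a k = st14FP B (fun _ => 1) a k :=
      st14FP_congr B I _ a k (fun j h1 h2 => htriv j h1 h2)
    refine ⟨c * civ, ?_⟩
    rw [he, hc, mul_smul_comm, smul_mul_assoc, hciv, smul_smul]
  intro r
  induction r with
  | zero =>
    intro I a k hk h0 hk0 hins hcard
    refine hbase I a k hk h0 hk0 ?_
    intro j h1 h2
    by_contra hne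
    have : j ∈ (Finset.Ico (a+1) (a+k)).filter (fun j => I j ≠ 1) := by
      simp only [Finset.mem_filter, Finset.mem_Ico]
      exact ⟨⟨by omega, h2⟩, hne⟩
    have := Finset.card_pos.mpr ⟨j, this⟩
    omega
  | succ r IH =>
    intro I a k hk h0 hk0 hins hcard
    by_cases htriv : ∀ j, a < j → j < a + k → I j = 1
    · exact hbase I a k hk h0 hk0 htriv
    · push_neg at htriv
      obtain ⟨j₀, hj₀1, hj₀2, hj₀ne⟩ := htriv
      set F := (Finset.Ico (a+1) (a+k)).filter (fun j => I j ≠ 1) with hF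
      have hFne : F.Nonempty := ⟨j₀, by
        simp only [hF, Finset.mem_filter, Finset.mem_Ico]
        exact ⟨⟨by omega, hj₀2⟩, hj₀ne⟩⟩
      set t := F.max' hFne with htdef
      have htF : t ∈ F := F.max'_mem hFne
      have htmax : ∀ j ∈ F, j ≤ t := fun j hj => F.le_max' j hj
      have htIco : a + 1 ≤ t ∧ t < a + k := by
        have := htF
        simp only [hF, Finset.mem_filter, Finset.mem_Ico] at this
        exact this.1
      have htne : I t ≠ 1 := by
        have := htF
        simp only [hF, Finset.mem_filter, Finset.mem_Ico] at this
        exact this.2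
      have htprop : hgt t = 0 ∧ (I t = Γ₀ ∨ I t = 1 - Γ₀) := by
        rcases hins t (by omega) (by omega) with h | h
        · exact absurd h htne
        · exact h
      set k₁ := t - a with hk₁
      set k₂ := a + k - t with hk₂
      have hk₁1 : 1 ≤ k₁ := by omega
      have hk₂1 : 1 ≤ k₂ := by omega
      have hsum : k = k₁ + k₂ := by omega
      have hat : a + k₁ = t := by omega
      have hsplitFP : st14FP B I a k = st14FP B I a k₁ * I t * st14FP B I t k₂ := by
        conv_lhs => rw [hsum]
        rw [st14FP_split B I a k₂ k₁ hk₁1 hk₂1, hat]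
      -- the right part is insertion-free
      have hRtriv : ∀ j, t < j → j < t + k₂ → I j = 1 := by
        intro j h1 h2
        by_contra hne
        have hjF : j ∈ F := by
          simp only [hF, Finset.mem_filter, Finset.mem_Ico]
          exact ⟨⟨by omega, by omega⟩, hne⟩
        have := htmax j hjF
        omega
      have hRwalk : st14FP B I t k₂ = st14FP B (fun _ => 1) t k₂ :=
        st14FP_congr B I _ t k₂ (fun j h1 h2 => hRtriv j h1 h2)
      have htk₂ : hgt (t + k₂) = 0 := by
        have : t + k₂ = a + k := by omega
        rw [this, hk0]
      obtain ⟨cR, hcR⟩ := hwalk t k₂ hk₂1 htprop.1 htk₂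
      have hRg : Γ₀ * st14FP B I t k₂ * Γ₀ = (cR * civ) • Γ₀ := by
        rw [hRwalk, hcR, mul_smul_comm, smul_mul_assoc, hciv, smul_smul]
      -- the left part via IH
      have hsubL : ((Finset.Ico (a+1) (a+k₁)).filter (fun j => I j ≠ 1)) ⊆ F.erase t := by
        intro j hj
        simp only [Finset.mem_filter, Finset.mem_Ico] at hj
        simp only [Finset.mem_erase, hF, Finset.mem_filter, Finset.mem_Ico]
        exact ⟨by omega, ⟨⟨by omega, by omega⟩, hj.2⟩⟩
      have hcardL : ((Finset.Ico (a+1) (a+k₁)).filter (fun j => I j ≠ 1)).card ≤ r := by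
        have h1 := Finset.card_le_card hsubL
        have h2 : (F.erase t).card = F.card - 1 := Finset.card_erase_of_mem htF
        have h3 : 1 ≤ F.card := Finset.card_pos.mpr hFne
        omega
      have htk₁ : hgt (a + k₁) = 0 := by rw [hat, htprop.1]
      obtain ⟨cL, hcL⟩ := IH I a k₁ hk₁1 h0 htk₁
        (fun j h1 h2 => hins j h1 (by omega)) hcardL
      rcases htprop.2 with hIt | hIt
      · -- I t = Γ₀ : glue
        refine ⟨cL * (cR * civ), ?_⟩
        rw [hsplitFP, hIt]
        exact st14glue Γ₀ hΓ _ _ _ _ hcL hRg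
      · -- I t = 1 - Γ₀
        -- merged product via modified insertion function
        set I' : ℕ → Matrix S S ℂ := fun j => if j = t then 1 else I j with hI'
        have hI'L : st14FP B I' a k₁ = st14FP B I a k₁ := by
          refine st14FP_congr B I' I a k₁ (fun j h1 h2 => ?_)
          simp only [hI']
          rw [if_neg (by omega)]
        have hI'R : st14FP B I' t k₂ = st14FP B I t k₂ := by
          refine st14FP_congr B I' I t k₂ (fun j h1 h2 => ?_)
          simp only [hI']
          rw [if_neg (by omega)]
        have hI'split : st14FP B I' a k = st14FP B I a k₁ * st14FP B I t k₂ := by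
          conv_lhs => rw [hsum]
          rw [st14FP_split B I' a k₂ k₁ hk₁1 hk₂1, hat, hI'L, hI'R]
          simp only [hI', if_pos rfl, mul_one]
        have hcardI' : ((Finset.Ico (a+1) (a+k)).filter (fun j => I' j ≠ 1)).card ≤ r := by
          have hsub : ((Finset.Ico (a+1) (a+k)).filter (fun j => I' j ≠ 1)) ⊆ F.erase t := by
            intro j hj
            simp only [Finset.mem_filter, Finset.mem_Ico, hI'] at hj
            have hjt : j ≠ t := by
              intro he
              rw [if_pos he] at hj
              exact hj.2 rfl
            rw [if_neg hjt] at hj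
            simp only [Finset.mem_erase, hF, Finset.mem_filter, Finset.mem_Ico]
            exact ⟨hjt, ⟨hj.1, hj.2⟩⟩
          have h1 := Finset.card_le_card hsub
          have h2 : (F.erase t).card = F.card - 1 := Finset.card_erase_of_mem htF
          have h3 : 1 ≤ F.card := Finset.card_pos.mpr hFne
          omega
        have hinsI' : ∀ j, a < j → j < a + k → I' j = 1 ∨ (hgt j = 0 ∧ (I' j = Γ₀ ∨ I' j = 1 - Γ₀)) := by
          intro j h1 h2
          by_cases hjt : j = t
          · left; simp only [hI', if_pos hjt]
          · simp only [hI', if_neg hjt]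
            exact hins j h1 h2
        obtain ⟨cM, hcM⟩ := IH I' a k hk h0 hk0 hinsI' hcardI'
        rw [hI'split] at hcM
        refine ⟨cM - cL * (cR * civ), ?_⟩
        have hglue := st14glue Γ₀ hΓ _ _ _ _ hcL hRg
        rw [hsplitFP, hIt]
        have expand : st14FP B I a k₁ * (1 - Γ₀) * st14FP B I t k₂
            = st14FP B I a k₁ * st14FP B I t k₂ - st14FP B I a k₁ * Γ₀ * st14FP B I t k₂ := by
          rw [mul_sub, mul_one, sub_mul]
        rw [expand, mul_sub, sub_mul, hcM, hglue, sub_smul]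

lemma st14kron_conj {n : ℕ} [NeZero n] (A : Matrix S S ℂ) (p q : Fin n) :
    (A ⊗ₖ Matrix.single p q (1:ℂ))ᴴ = Aᴴ ⊗ₖ Matrix.single q p 1 := by
  ext ⟨i, j⟩ ⟨k, l⟩
  simp only [conjTranspose_apply, kroneckerMap_apply, Matrix.single, Matrix.of_apply]
  by_cases h1 : p = l ∧ q = j
  · rw [if_pos h1, if_pos ⟨h1.2, h1.1⟩]
    simp
  · rw [if_neg h1, if_neg (fun hh => h1 ⟨hh.2, hh.1⟩)]
    simp
lemma st14kron_mul {n : ℕ} [NeZero n] (A B : Matrix S S ℂ) (p q r s : Fin n) :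
    (A ⊗ₖ Matrix.single p q (1:ℂ)) * (B ⊗ₖ Matrix.single r s 1)
      = if q = r then (A * B) ⊗ₖ Matrix.single p s 1 else 0 := by
  by_cases h : q = r
  · subst h
    rw [if_pos rfl, ← Matrix.mul_kronecker_mul]
    congr 1
    rw [Matrix.single_mul_single_same, one_mul]
  · rw [if_neg h, ← Matrix.mul_kronecker_mul, Matrix.single_mul_single_of_ne (h := h),
      Matrix.kronecker_zero]
lemma st14kron_smul {n : ℕ} [NeZero n] (A : Matrix S S ℂ) (c : ℂ) (p q : Fin n) :
    (c • A) ⊗ₖ Matrix.single p q (1:ℂ) = c • (A ⊗ₖ Matrix.single p q 1) :=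
  Matrix.smul_kronecker c A _
lemma st14kron_sub {n : ℕ} [NeZero n] (A B : Matrix S S ℂ) (p q : Fin n) :
    (A - B) ⊗ₖ Matrix.single p q (1:ℂ)
      = A ⊗ₖ Matrix.single p q 1 - B ⊗ₖ Matrix.single p q 1 := by
  ext ⟨i, j⟩ ⟨k, l⟩
  simp only [kroneckerMap_apply, Matrix.sub_apply]
  ring

lemma st14_AAh_zero {T : Type*} [Fintype T] [DecidableEq T] {A : Matrix T T ℂ}
    (h : A * Aᴴ = 0) : A = 0 := by
  ext i j
  have h1 : (A * Aᴴ) i i = 0 := by rw [h]; rfl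
  rw [Matrix.mul_apply] at h1
  simp only [Matrix.conjTranspose_apply] at h1
  have h2 : ∑ k, Complex.normSq (A i k) = 0 := by
    have h3 : ((∑ k, Complex.normSq (A i k) : ℝ) : ℂ) = 0 := by
      push_cast
      rw [← h1]
      congr 1
      ext k
      rw [← Complex.mul_conj]
      rfl
    exact_mod_cast h3
  have h4 := (Finset.sum_eq_zero_iff_of_nonneg
    (fun k _ => Complex.normSq_nonneg (A i k))).mp h2 j (Finset.mem_univ j)
  simpa using Complex.normSq_eq_zero.mp h4

/-- Under the proportionality conditions (i)–(iv), every operator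
`Θ(ε,Y) = P₀ Y₁ P_{ε₁} Y₂ ⋯ P_{ε_{m-1}} Y_m P₀` of order `m ≤ n`, with each `Y_j` among the
`W_i, W_i†`, other than `Θₙ↓ = P₀W₀P₁⋯P₁W_{n-1}P₀` and `Θₙ↑ = P₀W_{n-1}†P₁⋯P₁W₀†P₀`,
is proportional to `P₀`. Here `ε j = true` encodes `ε_j = 1` (i.e. the projection `P₁`). -/
theorem statement14 (n : ℕ) [NeZero n] (hn : 2 ≤ n)
    (Γ₀ : Matrix S S ℂ) (hΓproj : Γ₀ * Γ₀ = Γ₀) (hΓsa : Γ₀ᴴ = Γ₀)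
    (M : Fin n → Matrix S S ℂ)
    (hi : ∀ i : Fin n, ∃ c : ℂ,
      M i * M (i + 1) * (M (i + 1))ᴴ * (M i)ᴴ = c • ((M i * (M i)ᴴ) * (M i * (M i)ᴴ)))
    (hii : ∀ i : Fin n, ∃ c : ℂ,
      (M i * (M i)ᴴ) * (M i * (M i)ᴴ) = c • (M i * (M i)ᴴ))
    (hiii : ∀ i : Fin n, ∃ c : ℂ,
      M i * (M i)ᴴ = c • ((M (i - 1))ᴴ * M (i - 1)))
    (hiv : ∃ c : ℂ, Γ₀ * (M 0 * (M 0)ᴴ) * Γ₀ = c • Γ₀)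
    (m : ℕ) (hm1 : 1 ≤ m) (hmn : m ≤ n)
    (ε : ℕ → Bool) (Y : ℕ → Matrix (S × Fin n) (S × Fin n) ℂ)
    (hY : ∀ j < m, ∃ i : Fin n, Y j = Wop M i ∨ Y j = (Wop M i)ᴴ)
    (hnot1 : ¬ (m = n ∧ (∀ j, j < m - 1 → ε j = true) ∧
      ∀ j < m, Y j = Wop M (Fin.ofNat n (j : ℕ))))
    (hnot2 : ¬ (m = n ∧ (∀ j, j < m - 1 → ε j = true) ∧
      ∀ j < m, Y j = (Wop M (Fin.ofNat n (n - 1 - j : ℕ)))ᴴ)) :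
    ∃ c : ℂ,
      P0 n Γ₀ * Y 0 *
          ((List.range (m - 1)).map
            (fun j => (if ε j then 1 - P0 n Γ₀ else P0 n Γ₀) * Y (j + 1))).prod *
          P0 n Γ₀
        = c • P0 n Γ₀ := by
  open scoped Fin.NatCast Fin.IntCast Fin.CommRing in
  classical
  -- Case: some M i = 0 forces all M = 0 and the whole product vanishes.
  by_cases hM0 : ∃ i : Fin n, M i = 0
  · obtain ⟨i0, hi0⟩ := hM0
    have hstepz : ∀ k : ℕ, M (i0 + (k : Fin n)) = 0 := by
      intro k
      induction k with
      | zero => simpa using hi0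
      | succ k IHk =>
        obtain ⟨c, hc⟩ := hiii (i0 + (k : Fin n) + 1)
        have harg : (i0 + ((k : ℕ) : Fin n) + 1 - 1) = i0 + ((k : ℕ) : Fin n) := by ring
        rw [harg, IHk] at hc
        simp only [conjTranspose_zero, mul_zero, zero_mul, smul_zero] at hc
        have hz := st14_AAh_zero hc
        have hcast : ((k + 1 : ℕ) : Fin n) = ((k : ℕ) : Fin n) + 1 := by push_cast; ring
        rw [hcast, ← add_assoc]
        exact hz
    have hall : ∀ j : Fin n, M j = 0 := by
      intro j
      have h1 := hstepz ((j - i0).val)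
      rw [Fin.cast_val_eq_self] at h1
      rwa [show i0 + (j - i0) = j by ring] at h1
    have hY0 : Y 0 = 0 := by
      rcases hY 0 (by omega) with ⟨i, hi1 | hi1⟩
      · rw [hi1]; simp [Wop, hall i]
      · rw [hi1]; simp [Wop, hall i]
    exact ⟨0, by rw [hY0]; simp⟩
  · push_neg at hM0
    -- f : heights to matrices
    obtain ⟨f, hf⟩ : ∃ f : ℤ → Matrix S S ℂ, ∀ z, f z = M ((z : ℤ) : Fin n) :=
      ⟨fun z => M ((z : ℤ) : Fin n), fun _ => rfl⟩
    have ZI : ∀ z : ℤ, ∃ c : ℂ, f z * st14N f (z+1) * (f z)ᴴ = c • (st14N f z * st14N f z) := by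
      intro z
      obtain ⟨c, hc⟩ := hi ((z : Fin n))
      refine ⟨c, ?_⟩
      have hz1 : ((z + 1 : ℤ) : Fin n) = (z : Fin n) + 1 := by push_cast; ring
      simp only [st14N, hf, hz1]
      simpa only [mul_assoc] using hc
    have ZII : ∀ z : ℤ, ∃ c : ℂ, st14N f z * st14N f z = c • st14N f z := by
      intro z
      obtain ⟨c, hc⟩ := hii ((z : Fin n))
      exact ⟨c, by simpa only [st14N, hf] using hc⟩
    have hiii' : ∀ i : Fin n, ∃ c : ℂ, (M (i-1))ᴴ * M (i-1) = c • (M i * (M i)ᴴ) := by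
      intro i
      obtain ⟨c, hc⟩ := hiii i
      by_cases hc0 : c = 0
      · exfalso
        rw [hc0, zero_smul] at hc
        exact hM0 i (st14_AAh_zero hc)
      · exact ⟨c⁻¹, by rw [hc, smul_smul, inv_mul_cancel₀ hc0, one_smul]⟩
    have ZIII : ∀ z : ℤ, ∃ c : ℂ, (f (z-1))ᴴ * f (z-1) = c • st14N f z := by
      intro z
      obtain ⟨c, hc⟩ := hiii' ((z : Fin n))
      refine ⟨c, ?_⟩
      have hz1 : ((z - 1 : ℤ) : Fin n) = (z : Fin n) - 1 := by push_cast; ring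
      simpa only [st14N, hf, hz1] using hc
    have hivZ : ∃ c : ℂ, Γ₀ * st14N f 0 * Γ₀ = c • Γ₀ := by
      obtain ⟨c, hc⟩ := hiv
      exact ⟨c, by simpa only [st14N, hf, Int.cast_zero] using hc⟩
    -- choose presentation of each Y j
    have hYc : ∀ j : ℕ, ∃ p : Fin n × Bool, j < m →
        Y j = (if p.2 = true then Wop M p.1 else (Wop M p.1)ᴴ) := by
      intro j
      by_cases hj : j < m
      · rcases hY j hj with ⟨i, hi1 | hi1⟩
        · exact ⟨(i, true), fun _ => by simpa using hi1⟩
        · exact ⟨(i, false), fun _ => by simpa using hi1⟩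
      · exact ⟨(0, true), fun h => absurd h hj⟩
    choose pc hpc using hYc
    obtain ⟨iY, hiY⟩ : ∃ iY : ℕ → Fin n, ∀ j, iY j = (pc j).1 := ⟨_, fun _ => rfl⟩
    obtain ⟨sg, hsg⟩ : ∃ sg : ℕ → Bool, ∀ j, sg j = (pc j).2 := ⟨_, fun _ => rfl⟩
    have hYval : ∀ j, j < m → Y j = (if sg j = true then Wop M (iY j) else (Wop M (iY j))ᴴ) := by
      intro j hj
      rw [hiY, hsg]
      exact hpc j hj
    -- heights
    obtain ⟨hgt, hgt0, hstep⟩ : ∃ hgt : ℕ → ℤ, hgt 0 = 0 ∧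
        ∀ t, hgt (t+1) = hgt t + (if sg t then 1 else -1) :=
      ⟨fun t => ∑ j ∈ Finset.range t, (if sg j then (1:ℤ) else -1), by simp,
        fun t => Finset.sum_range_succ _ t⟩
    have hstep2 : ∀ j, hgt (j+1) = hgt j + 1 ∨ hgt (j+1) = hgt j - 1 := by
      intro j
      rcases Bool.dichotomy (sg j) with h | h
      · right; rw [hstep j, h]; simp; ring
      · left; rw [hstep j, h]; simp
    obtain ⟨Bop, hBop⟩ : ∃ B : ℕ → Matrix S S ℂ,
        ∀ j, B j = if sg j then f (hgt j) else (f (hgt j - 1))ᴴ := ⟨_, fun _ => rfl⟩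
    obtain ⟨insOp, hinsOp⟩ : ∃ I : ℕ → Matrix S S ℂ,
        ∀ j, I j = if ((hgt j : ℤ) : Fin n) = 0 then (if ε (j-1) then 1 - Γ₀ else Γ₀) else 1 :=
      ⟨_, fun _ => rfl⟩
    -- partial products
    obtain ⟨PP, hPP0, hPPsucc, hPPfin⟩ : ∃ PP : ℕ → Matrix (S × Fin n) (S × Fin n) ℂ,
        PP 0 = P0 n Γ₀ * Y 0 ∧
        (∀ t, PP (t+1) = PP t * ((if ε t then 1 - P0 n Γ₀ else P0 n Γ₀) * Y (t+1))) ∧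
        PP (m-1) = P0 n Γ₀ * Y 0 *
          ((List.range (m - 1)).map
            (fun j => (if ε j then 1 - P0 n Γ₀ else P0 n Γ₀) * Y (j + 1))).prod := by
      refine ⟨fun t => P0 n Γ₀ * Y 0 *
        ((List.range t).map
          (fun j => (if ε j then 1 - P0 n Γ₀ else P0 n Γ₀) * Y (j + 1))).prod, by simp, ?_, rfl⟩
      intro t
      simp only [List.range_succ, List.map_append, List.prod_append, List.map_cons,
        List.map_nil, List.prod_cons, List.prod_nil, mul_one, mul_assoc]
    -- convenient equalities
    have hP0eq : P0 n Γ₀ = Γ₀ ⊗ₖ Matrix.single (0 : Fin n) 0 1 := rfl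
    have hWopEq : ∀ i : Fin n, Wop M i = M i ⊗ₖ Matrix.single i (i+1) 1 := fun _ => rfl
    have hWopConj : ∀ i : Fin n, (Wop M i)ᴴ = (M i)ᴴ ⊗ₖ Matrix.single (i+1) i 1 := by
      intro i
      rw [hWopEq i, st14kron_conj]
    have hmulW : ∀ (X : Matrix S S ℂ) (c : Fin n) (j : ℕ), j < m →
        (X ⊗ₖ Matrix.single (0 : Fin n) c 1) * Y j =
          (if sg j then
            (if c = iY j then (X * M (iY j)) ⊗ₖ Matrix.single (0 : Fin n) (iY j + 1) 1 else 0)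
          else
            (if c = iY j + 1 then (X * (M (iY j))ᴴ) ⊗ₖ Matrix.single (0 : Fin n) (iY j) 1 else 0)) := by
      intro X c j hj
      rw [hYval j hj]
      rcases Bool.dichotomy (sg j) with hs | hs <;> rw [hs]
      · simp only [Bool.false_eq_true, if_false]
        rw [hWopConj, st14kron_mul]
      · simp only [eq_self_iff_true, if_true]
        rw [hWopEq, st14kron_mul]
    have hmulQ : ∀ (X : Matrix S S ℂ) (c : Fin n) (t : ℕ),
        (X ⊗ₖ Matrix.single (0 : Fin n) c 1) * (if ε t then 1 - P0 n Γ₀ else P0 n Γ₀) =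
          (if c = 0 then (X * (if ε t then 1 - Γ₀ else Γ₀)) ⊗ₖ Matrix.single (0 : Fin n) 0 1
           else (if ε t then X ⊗ₖ Matrix.single (0 : Fin n) c 1 else 0)) := by
      intro X c t
      rcases Bool.dichotomy (ε t) with he | he <;> rw [he]
      · simp only [Bool.false_eq_true, if_false]
        rw [hP0eq, st14kron_mul]
      · simp only [eq_self_iff_true, if_true]
        rw [mul_sub, mul_one, hP0eq, st14kron_mul]
        by_cases hc : c = 0
        · rw [if_pos hc, if_pos hc, hc]
          conv_rhs => rw [mul_sub, mul_one, st14kron_sub]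
        · rw [if_neg hc, if_neg hc, sub_zero]
    -- the main invariant
    have main : ∀ t, t ≤ m - 1 → (PP t = 0 ∨
        ((∀ j, j ≤ t → (if sg j then iY j = ((hgt j : ℤ) : Fin n)
            else iY j + 1 = ((hgt j : ℤ) : Fin n))) ∧
         (∀ j, j < t → ε j = false → ((hgt (j+1) : ℤ) : Fin n) = 0) ∧
         PP t = (Γ₀ * st14FP Bop insOp 0 (t+1)) ⊗ₖ
            Matrix.single (0 : Fin n) ((hgt (t+1) : ℤ) : Fin n) 1)) := by
      intro t
      induction t with
      | zero =>
        intro _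
        have h0m : 0 < m := by omega
        have hW := hmulW Γ₀ (0 : Fin n) 0 h0m
        have hPP0' : PP 0 = (Γ₀ ⊗ₖ Matrix.single (0 : Fin n) 0 1) * Y 0 := by rw [hPP0, hP0eq]
        have hclk0 : ((hgt 0 : ℤ) : Fin n) = 0 := by rw [hgt0]; simp
        rcases Bool.dichotomy (sg 0) with hs | hs
        · rw [hs] at hW
          simp only [Bool.false_eq_true, if_false] at hW
          by_cases hok : (0 : Fin n) = iY 0 + 1
          · right
            have hh1 : hgt 1 = -1 := by
              have := hstep 0
              rw [hs, hgt0] at this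
              simpa using this
            have hiY0 : iY 0 = -1 := eq_neg_of_add_eq_zero_left hok.symm
            have hclk1 : ((hgt 1 : ℤ) : Fin n) = iY 0 := by
              rw [hh1, hiY0]
              simp
            refine ⟨?_, by intro j hj; omega, ?_⟩
            · intro j hj
              have hj0 : j = 0 := by omega
              subst hj0
              rw [hs]
              simp only [Bool.false_eq_true, if_false]
              rw [hclk0]
              exact hok.symm
            · rw [hPP0', hW, if_pos hok]
              simp only [Nat.zero_add]
              have hBeq : st14FP Bop insOp 0 1 = (M (iY 0))ᴴ := by
                rw [show st14FP Bop insOp 0 1 = Bop 0 from rfl, hBop 0, hs]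
                simp only [Bool.false_eq_true, if_false]
                rw [hf, hgt0, hiY0]
                norm_num
              rw [hBeq, hclk1]
          · left
            rw [hPP0', hW, if_neg hok]
        · rw [hs] at hW
          rw [if_pos rfl] at hW
          by_cases hok : (0 : Fin n) = iY 0
          · right
            have hh1 : hgt 1 = 1 := by
              have := hstep 0
              rw [hs, hgt0] at this
              simpa using this
            have hclk1 : ((hgt 1 : ℤ) : Fin n) = iY 0 + 1 := by
              rw [hh1, ← hok]
              simp
            refine ⟨?_, by intro j hj; omega, ?_⟩
            · intro j hj
              have hj0 : j = 0 := by omega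
              subst hj0
              rw [hs, if_pos rfl, hclk0]
              exact hok.symm
            · rw [hPP0', hW, if_pos hok]
              simp only [Nat.zero_add]
              have hBeq : st14FP Bop insOp 0 1 = M (iY 0) := by
                rw [show st14FP Bop insOp 0 1 = Bop 0 from rfl, hBop 0, hs]
                simp only [eq_self_iff_true, if_true]
                rw [hf, hgt0, ← hok]
                norm_num
              rw [hBeq, hclk1]
          · left
            rw [hPP0', hW, if_neg hok]
      | succ t IHt =>
        intro ht1
        have htm : t ≤ m - 1 := by omega
        have htm2 : t + 1 < m := by omega
        rcases IHt htm with h0 | ⟨hOk, hEok, hPPt⟩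
        · left
          rw [hPPsucc t, h0, zero_mul]
        · -- stage 1 : multiply by the projection
          have stage1 : PP t * (if ε t then 1 - P0 n Γ₀ else P0 n Γ₀) = 0 ∨
              ((∀ j, j < t+1 → ε j = false → ((hgt (j+1) : ℤ) : Fin n) = 0) ∧
               PP t * (if ε t then 1 - P0 n Γ₀ else P0 n Γ₀)
                 = ((Γ₀ * st14FP Bop insOp 0 (t+1)) * insOp (t+1)) ⊗ₖ
                     Matrix.single (0 : Fin n) ((hgt (t+1) : ℤ) : Fin n) 1) := by
            have hQ := hmulQ (Γ₀ * st14FP Bop insOp 0 (t+1)) ((hgt (t+1) : ℤ) : Fin n) t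
            rw [← hPPt] at hQ
            by_cases hc : ((hgt (t+1) : ℤ) : Fin n) = 0
            · right
              have hins : insOp (t+1) = (if ε t then 1 - Γ₀ else Γ₀) := by
                rw [hinsOp (t+1), if_pos hc]
                simp only [Nat.add_sub_cancel]
              refine ⟨?_, ?_⟩
              · intro j hj hε
                rcases Nat.lt_or_ge j t with hjt | hjt
                · exact hEok j hjt hε
                · have hjt' : j = t := by omega
                  subst hjt'
                  exact hc
              · rw [hQ, if_pos hc, ← hins, hc]
            · rcases Bool.dichotomy (ε t) with he | he
              · left
                rw [hQ, if_neg hc, he]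
                simp
              · right
                have hins : insOp (t+1) = 1 := by rw [hinsOp (t+1), if_neg hc]
                refine ⟨?_, ?_⟩
                · intro j hj hε
                  rcases Nat.lt_or_ge j t with hjt | hjt
                  · exact hEok j hjt hε
                  · have hjt' : j = t := by omega
                    subst hjt'
                    rw [he] at hε
                    cases hε
                · rw [hQ, if_neg hc, he, hins, mul_one, if_pos rfl]
                  exact hPPt
          -- stage 2 : multiply by Y (t+1)
          have stage2 : ∀ Z : Matrix S S ℂ,
              (Z ⊗ₖ Matrix.single (0 : Fin n) ((hgt (t+1) : ℤ) : Fin n) 1) * Y (t+1) = 0 ∨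
              ((if sg (t+1) then iY (t+1) = ((hgt (t+1) : ℤ) : Fin n)
                  else iY (t+1) + 1 = ((hgt (t+1) : ℤ) : Fin n)) ∧
               (Z ⊗ₖ Matrix.single (0 : Fin n) ((hgt (t+1) : ℤ) : Fin n) 1) * Y (t+1)
                 = (Z * Bop (t+1)) ⊗ₖ Matrix.single (0 : Fin n) ((hgt (t+2) : ℤ) : Fin n) 1) := by
            intro Z
            have hW := hmulW Z ((hgt (t+1) : ℤ) : Fin n) (t+1) htm2
            rcases Bool.dichotomy (sg (t+1)) with hs | hs
            · rw [hs] at hW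
              simp only [Bool.false_eq_true, if_false] at hW
              by_cases hok : ((hgt (t+1) : ℤ) : Fin n) = iY (t+1) + 1
              · right
                have hh : hgt (t+2) = hgt (t+1) - 1 := by
                  have := hstep (t+1)
                  rw [hs] at this
                  show hgt (t+1+1) = _
                  simp at this
                  rw [this]; ring
                have hMi : (M (iY (t+1)))ᴴ = Bop (t+1) := by
                  rw [hBop (t+1), hs]
                  simp only [Bool.false_eq_true, if_false]
                  congr 1
                  rw [hf]
                  congr 1
                  have hcast : ((hgt (t+1) - 1 : ℤ) : Fin n)
                      = ((hgt (t+1) : ℤ) : Fin n) - 1 := by push_cast; ring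
                  rw [hcast, hok]
                  ring
                have hidx : iY (t+1) = ((hgt (t+2) : ℤ) : Fin n) := by
                  have hcast : ((hgt (t+1) - 1 : ℤ) : Fin n)
                      = ((hgt (t+1) : ℤ) : Fin n) - 1 := by push_cast; ring
                  rw [hh, hcast, hok]
                  ring
                refine ⟨by rw [hs]; simp only [Bool.false_eq_true, if_false]; exact hok.symm, ?_⟩
                rw [hW, if_pos hok, hMi, hidx]
              · left
                rw [hW, if_neg hok]
            · rw [hs, if_pos rfl] at hW
              by_cases hok : ((hgt (t+1) : ℤ) : Fin n) = iY (t+1)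
              · right
                have hh : hgt (t+2) = hgt (t+1) + 1 := by
                  have := hstep (t+1)
                  rw [hs] at this
                  simpa using this
                have hMi : M (iY (t+1)) = Bop (t+1) := by
                  rw [hBop (t+1), hs, if_pos rfl, hf, ← hok]
                have hidx : iY (t+1) + 1 = ((hgt (t+2) : ℤ) : Fin n) := by
                  have hcast : ((hgt (t+1) + 1 : ℤ) : Fin n)
                      = ((hgt (t+1) : ℤ) : Fin n) + 1 := by push_cast; ring
                  rw [hh, hcast, hok]
                refine ⟨by rw [hs, if_pos rfl]; exact hok.symm, ?_⟩
                rw [hW, if_pos hok, hMi, hidx]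
              · left
                rw [hW, if_neg hok]
          rcases stage1 with hdead | ⟨hEok2, hS1⟩
          · left
            rw [hPPsucc t, ← mul_assoc, hdead, zero_mul]
          · rcases stage2 ((Γ₀ * st14FP Bop insOp 0 (t+1)) * insOp (t+1)) with hdead | ⟨hok2, hS2⟩
            · left
              rw [hPPsucc t, ← mul_assoc, hS1, hdead]
            · right
              refine ⟨?_, hEok2, ?_⟩
              · intro j hj
                rcases Nat.lt_or_ge j (t+1) with hjt | hjt
                · exact hOk j (by omega)
                · have hjt' : j = t + 1 := by omega
                  subst hjt'
                  exact hok2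
              · rw [hPPsucc t, ← mul_assoc, hS1, hS2]
                congr 1
                rw [show t + 1 + 1 = (t+1) + 1 from rfl,
                  st14FP_succ Bop insOp 0 (t+1) (by omega)]
                simp only [Nat.zero_add]
                simp [mul_assoc]
        -- conclude
    rcases main (m-1) le_rfl with h0 | ⟨hOk, hEok, hPPm⟩
    · exact ⟨0, by rw [← hPPfin, h0, zero_mul, zero_smul]⟩
    · have hm' : m - 1 + 1 = m := by omega
      rw [hm'] at hPPm
      have hlast : PP (m-1) * P0 n Γ₀ =
          (if ((hgt m : ℤ) : Fin n) = 0 then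
            (Γ₀ * st14FP Bop insOp 0 m * Γ₀) ⊗ₖ Matrix.single (0:Fin n) 0 1 else 0) := by
        rw [hPPm, hP0eq, st14kron_mul]
      by_cases hc : ((hgt m : ℤ) : Fin n) = 0
      · by_cases hconst : ∀ j, j < m → sg j = sg 0
        · exfalso
          rcases Bool.dichotomy (sg 0) with hs0 | hs0
          · -- all steps down : excluded pattern Θₙ↑
            have hall : ∀ j, j < m → sg j = false := fun j hj => (hconst j hj).trans hs0
            have hgtdown : ∀ j, j ≤ m → hgt j = -(j:ℤ) := by
              intro j
              induction j with
              | zero => intro _; simpa using hgt0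
              | succ j IHj =>
                intro hj
                rw [hstep j, hall j (by omega), IHj (by omega)]
                simp only [Bool.false_eq_true, if_false]
                push_cast
                ring
            have hmn' : m = n := by
              have h1 := hc
              rw [hgtdown m le_rfl, Int.cast_neg, Int.cast_natCast, neg_eq_zero] at h1
              have h3 : n ∣ m := Fin.natCast_eq_zero.mp h1
              have := Nat.le_of_dvd (by omega) h3
              omega
            have hεtrue : ∀ j, j < m - 1 → ε j = true := by
              intro j hj
              rcases Bool.dichotomy (ε j) with he | he
              · exfalso
                have h1 := hEok j (by omega) he
                rw [hgtdown (j+1) (by omega), Int.cast_neg, Int.cast_natCast, neg_eq_zero] at h1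
                have h3 : n ∣ (j+1) := Fin.natCast_eq_zero.mp h1
                have := Nat.le_of_dvd (by omega) h3
                omega
              · exact he
            refine hnot2 ⟨hmn', hεtrue, ?_⟩
            intro j hj
            have hOkj := hOk j (by omega)
            rw [hall j hj] at hOkj
            simp only [Bool.false_eq_true, if_false] at hOkj
            have hYj := hYval j hj
            rw [hall j hj] at hYj
            simp only [Bool.false_eq_true, if_false] at hYj
            have hidx : iY j = ((n - 1 - j : ℕ) : Fin n) := by
              have h1 : iY j = ((hgt j : ℤ) : Fin n) - 1 := by rw [← hOkj]; ring
              rw [hgtdown j (by omega)] at h1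
              have h2 : (((n - 1 - j : ℕ) : ℤ) : Fin n) = ((-(j:ℤ) : ℤ) : Fin n) - 1 := by
                have hz : ((n - 1 - j : ℕ) : ℤ) = (n : ℤ) - 1 - j := by
                  have : j < n := by omega
                  omega
                rw [hz]
                push_cast
                rw [Fin.natCast_self]
                ring
              rw [Int.cast_natCast] at h2
              rw [h1, ← h2]
            rw [hYj, hidx]
            rfl
          · -- all steps up : excluded pattern Θₙ↓
            have hall : ∀ j, j < m → sg j = true := fun j hj => (hconst j hj).trans hs0
            have hgtup : ∀ j, j ≤ m → hgt j = (j:ℤ) := by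
              intro j
              induction j with
              | zero => intro _; simpa using hgt0
              | succ j IHj =>
                intro hj
                rw [hstep j, hall j (by omega), IHj (by omega)]
                simp only [eq_self_iff_true, if_true]
                push_cast
                ring
            have hmn' : m = n := by
              have h1 := hc
              rw [hgtup m le_rfl, Int.cast_natCast] at h1
              have h3 : n ∣ m := Fin.natCast_eq_zero.mp h1
              have := Nat.le_of_dvd (by omega) h3
              omega
            have hεtrue : ∀ j, j < m - 1 → ε j = true := by
              intro j hj
              rcases Bool.dichotomy (ε j) with he | he
              · exfalso
                have h1 := hEok j (by omega) he
                rw [hgtup (j+1) (by omega), Int.cast_natCast] at h1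
                have h3 : n ∣ (j+1) := Fin.natCast_eq_zero.mp h1
                have := Nat.le_of_dvd (by omega) h3
                omega
              · exact he
            refine hnot1 ⟨hmn', hεtrue, ?_⟩
            intro j hj
            have hOkj := hOk j (by omega)
            rw [hall j hj, if_pos rfl] at hOkj
            have hYj := hYval j hj
            rw [hall j hj, if_pos rfl] at hYj
            have hidx : iY j = ((j : ℕ) : Fin n) := by
              rw [hOkj, hgtup j (by omega), Int.cast_natCast]
            rw [hYj, hidx]
            rfl
        · -- mixed walk : sandwich lemma applies
          push_neg at hconst
          obtain ⟨j₁, hj₁m, hj₁ne⟩ := hconst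
          have hexfl : ∃ j, j < m ∧ sg j ≠ sg 0 := ⟨j₁, hj₁m, hj₁ne⟩
          obtain ⟨t₁, ⟨ht₁m, ht₁ne⟩, ht₁min⟩ :
              ∃ t₁, (t₁ < m ∧ sg t₁ ≠ sg 0) ∧ ∀ u, u < t₁ → ¬(u < m ∧ sg u ≠ sg 0) :=
            ⟨Nat.find hexfl, Nat.find_spec hexfl, fun u hu => Nat.find_min hexfl hu⟩
          have ht₁pos : 1 ≤ t₁ := by
            rcases Nat.eq_zero_or_pos t₁ with h | h
            · exact absurd (h ▸ rfl) ht₁ne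
            · exact h
          have hprev : sg (t₁ - 1) = sg 0 := by
            by_contra hne
            exact ht₁min (t₁ - 1) (by omega) ⟨by omega, hne⟩
          have hflip : sg (t₁ - 1) ≠ sg t₁ := by
            rw [hprev]
            exact fun h => ht₁ne h.symm
          have ht11 : t₁ - 1 + 1 = t₁ := by omega
          have hcanc : hgt (t₁ + 1) = hgt (t₁ - 1) := by
            have h1 := hstep (t₁ - 1)
            rw [ht11] at h1
            have h2 := hstep t₁
            rcases Bool.dichotomy (sg (t₁ - 1)) with ha | ha <;>
              rcases Bool.dichotomy (sg t₁) with hb | hb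
            · rw [ha, hb] at hflip; exact absurd rfl hflip
            · rw [ha] at h1; rw [hb] at h2; simp only [Bool.false_eq_true, if_false,
                eq_self_iff_true, if_true] at h1 h2; omega
            · rw [ha] at h1; rw [hb] at h2; simp only [Bool.false_eq_true, if_false,
                eq_self_iff_true, if_true] at h1 h2; omega
            · rw [ha, hb] at hflip; exact absurd rfl hflip
          have hbnd : ∀ a d : ℕ, hgt a - d ≤ hgt (a + d) ∧ hgt (a + d) ≤ hgt a + d := by
            intro a d
            induction d with
            | zero => simp
            | succ d IHd =>
              have he : a + (d+1) = (a+d)+1 := by omega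
              rcases hstep2 (a+d) with h1 | h1 <;> rw [he] <;>
                · push_cast
                  push_cast at IHd
                  omega
          have hm0 : hgt m = 0 := by
            have hA := hbnd 0 (t₁ - 1)
            simp only [Nat.zero_add] at hA
            rw [hgt0] at hA
            have hB := hbnd (t₁ + 1) (m - (t₁ + 1))
            have he : t₁ + 1 + (m - (t₁ + 1)) = m := by omega
            rw [he, hcanc] at hB
            have hdvd : (n : ℤ) ∣ hgt m := (CharP.intCast_eq_zero_iff (Fin n) n _).mp hc
            by_contra hne0
            have habs : (n:ℤ) ≤ |hgt m| := Int.le_of_dvd (abs_pos.mpr hne0) ((dvd_abs _ _).mpr hdvd)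
            have hub : |hgt m| ≤ (m:ℤ) - 2 := abs_le.mpr ⟨by push_cast at hA hB ⊢; omega,
              by push_cast at hA hB ⊢; omega⟩
            have : (n:ℤ) ≤ (m:ℤ) - 2 := le_trans habs hub
            have : (m : ℤ) ≤ (n : ℤ) := by exact_mod_cast Int.ofNat_le.mpr hmn
            omega
          have hint : ∀ j, 0 < j → j < m → ((hgt j : ℤ) : Fin n) = 0 → hgt j = 0 := by
            intro j hj0 hjm hcj
            have hA := hbnd 0 j
            simp only [Nat.zero_add] at hA
            rw [hgt0] at hA
            have hB := hbnd j (m - j)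
            have he : j + (m - j) = m := by omega
            rw [he, hm0] at hB
            have hdvd : (n : ℤ) ∣ hgt j := (CharP.intCast_eq_zero_iff (Fin n) n _).mp hcj
            by_contra hne0
            have habs : (n:ℤ) ≤ |hgt j| := Int.le_of_dvd (abs_pos.mpr hne0) ((dvd_abs _ _).mpr hdvd)
            have h1 : |hgt j| ≤ (j:ℤ) := abs_le.mpr ⟨by omega, by omega⟩
            have h2 : |hgt j| ≤ (m:ℤ) - j := abs_le.mpr ⟨by omega, by omega⟩
            have : (m : ℤ) ≤ (n : ℤ) := by exact_mod_cast Int.ofNat_le.mpr hmn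
            omega
          have hins_cond : ∀ j, 0 < j → j < 0 + m →
              insOp j = 1 ∨ (hgt j = 0 ∧ (insOp j = Γ₀ ∨ insOp j = 1 - Γ₀)) := by
            intro j hj0 hjm
            rw [hinsOp j]
            by_cases hcj : ((hgt j : ℤ) : Fin n) = 0
            · right
              refine ⟨hint j hj0 (by omega) hcj, ?_⟩
              rw [if_pos hcj]
              rcases Bool.dichotomy (ε (j-1)) with he | he <;> rw [he]
              · left; simp
              · right; simp
            · left; rw [if_neg hcj]
          obtain ⟨c, hcΓ⟩ := st14sand f ZI ZII ZIII sg hgt hstep Bop hBop Γ₀ hΓproj hivZ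
            (((Finset.Ico (0+1) (0+m)).filter (fun j => insOp j ≠ 1)).card) insOp 0 m hm1
            hgt0 (by simp only [Nat.zero_add]; exact hm0) hins_cond le_rfl
          refine ⟨c, ?_⟩
          rw [← hPPfin, hlast, if_pos hc, hcΓ, st14kron_smul]
          rfl
      · exact ⟨0, by rw [← hPPfin, hlast, if_neg hc, zero_smul]⟩
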